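/- Let M be a free partially commutative monoid and w ∈ M a nonidentity element. Let S be the set of generators a such that w = a·w' for some w' ∈ M. Then S is a clique, i.e., every two distinct elements of S commute in M. -/

import Mathlib

open scoped Classical

/-- The relation generating a free partially commutative (trace) monoid:
`x_a x_b = x_b x_a` for `(a,b)` in the commutation set `I`. -/
def traceRel (n : ℕ) (I : Set (Fin n × Fin n)) :
    FreeMonoid (Fin n) → FreeMonoid (Fin n) → Prop := fun u v =>
  ∃ a b, (a, b) ∈ I ∧ u = FreeMonoid.of a * FreeMonoid.of b ∧
    v = FreeMonoid.of b * FreeMonoid.of a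

/-- The congruence generated by the commutation relations. -/
abbrev traceCon (n : ℕ) (I : Set (Fin n × Fin n)) : Con (FreeMonoid (Fin n)) :=
  conGen (traceRel n I)

/-- The free partially commutative monoid `⟨x_1,…,x_n⟩/≃_I`. -/
abbrev TraceMonoid (n : ℕ) (I : Set (Fin n × Fin n)) := (traceCon n I).Quotient

/-- The generator `x_i` as an element of the trace monoid. -/
def gen {n : ℕ} {I : Set (Fin n × Fin n)} (i : Fin n) : TraceMonoid n I :=
  (traceCon n I).mk' (FreeMonoid.of i)

/-- A clique of the trace monoid: a set of generators which pairwise commute. -/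
def IsMClique {n : ℕ} (I : Set (Fin n × Fin n)) (Q : Finset (Fin n)) : Prop :=
  ∀ a ∈ Q, ∀ b ∈ Q, a ≠ b → Commute (gen (I := I) a) (gen (I := I) b)

/-- The canonical word `w_Q` in the trace monoid associated to a finite set of
generators (taking the product in increasing order). -/
def wordOf {n : ℕ} (I : Set (Fin n × Fin n)) (Q : Finset (Fin n)) : TraceMonoid n I :=
  (traceCon n I).mk' (FreeMonoid.ofList (Q.sort (· ≤ ·)))

/-- The Cauchy product of two formal power series on a monoid. -/
noncomputable def cauchy {M : Type*} [Monoid M] (f g : M → ℤ) : M → ℤ := fun w =>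
  ∑ᶠ p : M × M, if p.1 * p.2 = w then f p.1 * g p.2 else 0

/-- The unit of the ring of formal power series: the characteristic function
of the identity. -/
noncomputable def deltaOne {M : Type*} [Monoid M] : M → ℤ := fun w => if w = 1 then 1 else 0

/-- The clique polynomial `μ_M = Σ_Q (−1)^{|Q|} [Q]` of a trace monoid. -/
noncomputable def cliqueSeries (n : ℕ) (I : Set (Fin n × Fin n)) : TraceMonoid n I → ℤ :=
  fun w => ∑ Q ∈ (Finset.univ : Finset (Fin n)).powerset.filter (IsMClique I),
    if wordOf I Q = w then (-1 : ℤ) ^ Q.card else 0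
/-- Let w be a nonidentity element of a free partially commutative monoid and
let S be the set of generators a such that w = a·w' for some w'.  Then every
two distinct elements of S commute in M, i.e. S is a clique. -/
theorem stmt_1 (n : ℕ) (I : Set (Fin n × Fin n)) (w : TraceMonoid n I) (hw : w ≠ 1)
    (a b : Fin n) (ha : ∃ w' : TraceMonoid n I, w = gen a * w')
    (hb : ∃ w' : TraceMonoid n I, w = gen b * w') (hab : a ≠ b) :
    Commute (gen (I := I) a) (gen (I := I) b) := by
  
  classical
  by_cases hI : (a, b) ∈ I
  · show gen a * gen b = gen b * gen a
    have h : (traceCon n I) (FreeMonoid.of a * FreeMonoid.of b)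
        (FreeMonoid.of b * FreeMonoid.of a) :=
      ConGen.Rel.of _ _ ⟨a, b, hI, rfl, rfl⟩
    simpa [gen, ← map_mul] using (traceCon n I).eq.mpr h
  · by_cases hI' : (b, a) ∈ I
    · show gen a * gen b = gen b * gen a
      have h : (traceCon n I) (FreeMonoid.of b * FreeMonoid.of a)
          (FreeMonoid.of a * FreeMonoid.of b) :=
        ConGen.Rel.of _ _ ⟨b, a, hI', rfl, rfl⟩
      simpa [gen, ← map_mul] using ((traceCon n I).eq.mpr h).symm
    · exfalso
      set φ : FreeMonoid (Fin n) →* FreeMonoid (Fin n) :=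
        FreeMonoid.lift (fun c => if c = a ∨ c = b then FreeMonoid.of c else 1) with hφ
      have key : ∀ u v, traceRel n I u v → φ u = φ v := by
        rintro u v ⟨c, d, hcd, rfl, rfl⟩
        by_cases hc : c = a ∨ c = b
        · by_cases hd : d = a ∨ d = b
          · -- both in {a,b}; either c = d or {c,d} = {a,b}, contradiction
            rcases hc with rfl | rfl <;> rcases hd with rfl | rfl
            · rfl
            · exact absurd hcd hI
            · exact absurd hcd hI'
            · rfl
          · simp [hφ, hc, hd]
        · simp [hφ, hc]
      have hker : traceCon n I ≤ Con.ker φ :=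
        Con.conGen_le.2 (fun u v h => key u v h)
      set ψ := (traceCon n I).lift φ hker with hψ
      obtain ⟨wa, hwa⟩ := ha
      obtain ⟨wb, hwb⟩ := hb
      obtain ⟨ua, rfl⟩ := Con.mk'_surjective wa
      obtain ⟨ub, rfl⟩ := Con.mk'_surjective wb
      have hψm : ∀ u : FreeMonoid (Fin n), ψ ((traceCon n I).mk' u) = φ u := by
        intro u; simp [hψ]
      have h1 : ψ w = FreeMonoid.of a * φ ua := by
        rw [hwa]
        simp only [gen, map_mul, hψm]
        congr 1
        simp [hφ]
      have h2 : ψ w = FreeMonoid.of b * φ ub := by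
        rw [hwb]
        simp only [gen, map_mul, hψm]
        congr 1
        simp [hφ]
      have : a = b := by
        have := h1.symm.trans h2
        have hl := congrArg FreeMonoid.toList this
        simpa using (List.cons.injEq _ _ _ _ ▸ hl).1
      exact hab this
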